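/- The CDF of a sum dominates at the origin with the product order: if γ₁, …, γ_L are independent nonnegative random variables where γ_ℓ has a density f_ℓ that satisfies f_ℓ(x) ~ c_ℓ x^{m_ℓ − 1} as x → 0⁺ (with c_ℓ > 0, m_ℓ > 0), then P(γ₁ + ⋯ + γ_L ≤ x) ~ (∏_ℓ c_ℓ Γ(m_ℓ)) · x^{Σ m_ℓ} / Γ(1 + Σ_ℓ m_ℓ) as x → 0⁺. -/

import Mathlib

set_option maxHeartbeats 1000000

open MeasureTheory Real Set Filter ProbabilityTheory
open scoped ENNReal

namespace SumCdfAsymp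

lemma exists_delta {P : ℝ → Prop} (h : ∀ᶠ x in nhdsWithin 0 (Ioi 0), P x) :
    ∃ δ > (0:ℝ), ∀ x : ℝ, 0 < x → x < δ → P x := by
  rw [eventually_nhdsWithin_iff, Metric.eventually_nhds_iff] at h
  obtain ⟨δ, hδ, h⟩ := h
  exact ⟨δ, hδ, fun x hx hxδ => h (by simpa [Real.dist_eq, abs_of_pos hx] using hxδ) hx⟩

lemma eventually_pos : ∀ᶠ x : ℝ in nhdsWithin 0 (Ioi 0), 0 < x :=
  eventually_mem_nhdsWithin

lemma eventually_lt_delta {δ : ℝ} (hδ : 0 < δ) :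
    ∀ᶠ x : ℝ in nhdsWithin 0 (Ioi 0), x < δ :=
  (eventually_lt_nhds hδ).filter_mono nhdsWithin_le_nhds

lemma tendsto_of_bounds {F G : ℝ → ℝ} (hG : ∀ᶠ x in nhdsWithin 0 (Ioi 0), 0 < G x)
    (h : ∀ ε : ℝ, 0 < ε → ε < 1 → ∀ᶠ x in nhdsWithin 0 (Ioi 0),
      (1 - ε) * G x ≤ F x ∧ F x ≤ (1 + ε) * G x) :
    Tendsto (fun x => F x / G x) (nhdsWithin 0 (Ioi 0)) (nhds 1) := by
  rw [Metric.tendsto_nhds]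
  intro ε hε
  set ε' := min (ε/2) (1/2) with hε'def
  have hε'0 : 0 < ε' := lt_min (by linarith) (by norm_num)
  have hε'1 : ε' < 1 := lt_of_le_of_lt (min_le_right _ _) (by norm_num)
  have hε'ε : ε' < ε := lt_of_le_of_lt (min_le_left _ _) (by linarith)
  filter_upwards [hG, h ε' hε'0 hε'1] with x hGx hb
  obtain ⟨h1, h2⟩ := hb
  rw [Real.dist_eq]
  have h1' : 1 - ε' ≤ F x / G x := by rw [le_div_iff₀ hGx]; linarith
  have h2' : F x / G x ≤ 1 + ε' := by rw [div_le_iff₀ hGx]; linarith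
  have habs : |F x / G x - 1| ≤ ε' := abs_le.2 ⟨by linarith, by linarith⟩
  exact lt_of_le_of_lt habs hε'ε

lemma eventually_bounds {F : ℝ → ℝ} {D r : ℝ} (hD : 0 < D)
    (h : Tendsto (fun x => F x / (D * x ^ r)) (nhdsWithin 0 (Ioi 0)) (nhds 1))
    {ε : ℝ} (hε : 0 < ε) :
    ∀ᶠ x in nhdsWithin 0 (Ioi 0),
      (1 - ε) * (D * x ^ r) ≤ F x ∧ F x ≤ (1 + ε) * (D * x ^ r) := by
  filter_upwards [eventually_pos, Metric.tendsto_nhds.mp h ε hε] with x hx hd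
  have hGx : 0 < D * x ^ r := mul_pos hD (Real.rpow_pos_of_pos hx r)
  rw [Real.dist_eq] at hd
  obtain ⟨hd1, hd2⟩ := abs_lt.mp hd
  constructor
  · have h1 : 1 - ε ≤ F x / (D * x ^ r) := by linarith
    calc (1 - ε) * (D * x ^ r) ≤ F x / (D * x ^ r) * (D * x ^ r) :=
          mul_le_mul_of_nonneg_right h1 hGx.le
    _ = F x := div_mul_cancel₀ _ hGx.ne'
  · have h1 : F x / (D * x ^ r) ≤ 1 + ε := by linarith
    calc F x = F x / (D * x ^ r) * (D * x ^ r) := (div_mul_cancel₀ _ hGx.ne').symm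
    _ ≤ (1 + ε) * (D * x ^ r) := mul_le_mul_of_nonneg_right h1 hGx.le

lemma cdf_zero_at_zero (ν : Measure ℝ) [IsFiniteMeasure ν] {A r : ℝ} (hA : 0 < A) (hr : 0 < r)
    (h : Tendsto (fun x => (ν (Iic x)).toReal / (A * x ^ r)) (nhdsWithin 0 (Ioi 0)) (nhds 1)) :
    ν (Iic 0) = 0 := by
  have h2 : Tendsto (fun x : ℝ => A * x ^ r) (nhdsWithin 0 (Ioi 0)) (nhds 0) := by
    have h0 : Tendsto (fun x : ℝ => x ^ r) (nhdsWithin 0 (Ioi 0)) (nhds 0) := by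
      have h1 := (Real.continuousAt_rpow_const 0 r (Or.inr hr.le)).tendsto
      rw [Real.zero_rpow hr.ne'] at h1
      exact h1.mono_left nhdsWithin_le_nhds
    simpa using h0.const_mul A
  have h3 : Tendsto (fun x => (ν (Iic x)).toReal) (nhdsWithin 0 (Ioi 0)) (nhds 0) := by
    have h4 := h.mul h2
    rw [one_mul] at h4
    apply h4.congr'
    filter_upwards [eventually_pos] with x hx
    exact div_mul_cancel₀ _ (mul_pos hA (Real.rpow_pos_of_pos hx r)).ne'
  have hmono : ∀ᶠ x in nhdsWithin 0 (Ioi (0:ℝ)),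
      (ν (Iic 0)).toReal ≤ (ν (Iic x)).toReal := by
    filter_upwards [eventually_pos] with x hx
    exact ENNReal.toReal_mono (measure_ne_top ν _) (measure_mono (Iic_subset_Iic.mpr hx.le))
  have hle : (ν (Iic 0)).toReal ≤ 0 := ge_of_tendsto h3 hmono
  have h5 : (ν (Iic 0)).toReal = 0 := le_antisymm hle ENNReal.toReal_nonneg
  rwa [ENNReal.toReal_eq_zero_iff, or_iff_left (measure_ne_top ν _)] at h5

lemma beta_integral_eval {p q x : ℝ} (hp : 0 < p) (hq : 0 < q) (hx : 0 < x) :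
    ∫ s in (0:ℝ)..x, s ^ q * (x - s) ^ (p - 1)
      = Real.Gamma (q+1) * Real.Gamma p / Real.Gamma (q+1+p) * x ^ (q + p) := by
  have key := Complex.betaIntegral_scaled (q+1 : ℂ) (p : ℂ) hx
  have h1 : ((∫ s in (0:ℝ)..x, s ^ q * (x - s) ^ (p - 1) : ℝ) : ℂ)
      = ∫ t in (0:ℝ)..x, (t:ℂ) ^ ((q:ℂ)+1-1) * ((x:ℂ) - t) ^ ((p:ℂ)-1) := by
    rw [← intervalIntegral.integral_ofReal]
    apply intervalIntegral.integral_congr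
    intro t ht
    rw [uIcc_of_le hx.le] at ht
    obtain ⟨ht0, htx⟩ := ht
    show ((t ^ q * (x - t) ^ (p-1) : ℝ) : ℂ) = (t:ℂ) ^ ((q:ℂ)+1-1) * ((x:ℂ) - t) ^ ((p:ℂ)-1)
    rw [Complex.ofReal_mul, Complex.ofReal_cpow ht0, Complex.ofReal_cpow (by linarith : (0:ℝ) ≤ x - t)]
    push_cast
    ring_nf
  have hΓ : Complex.Gamma ((q:ℂ)+1+p) ≠ 0 := by
    rw [(by push_cast; ring : ((q:ℂ)+1+(p:ℂ)) = ((q+1+p : ℝ) : ℂ)), Complex.Gamma_ofReal]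
    exact_mod_cast (Real.Gamma_pos_of_pos (by linarith : (0:ℝ) < q+1+p)).ne'
  have hbeta : Complex.betaIntegral (q+1) p
      = Complex.Gamma ((q:ℂ)+1) * Complex.Gamma p / Complex.Gamma ((q:ℂ)+1+p) := by
    rw [eq_div_iff hΓ, mul_comm]
    exact (Complex.Gamma_mul_Gamma_eq_betaIntegral
      (by simp; linarith) (by simpa using hp)).symm
  rw [← h1, hbeta] at key
  have h2 : ((q:ℂ)+1+(p:ℂ)-1) = ((q+p : ℝ) : ℂ) := by push_cast; ring
  rw [h2, ← Complex.ofReal_cpow hx.le] at key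
  have h3 : ((q:ℂ)+1) = ((q+1:ℝ):ℂ) := by push_cast; ring
  have h4 : ((q:ℂ)+1+(p:ℂ)) = ((q+1+p:ℝ):ℂ) := by push_cast; ring
  rw [h4, h3, Complex.Gamma_ofReal, Complex.Gamma_ofReal, Complex.Gamma_ofReal] at key
  have key2 : ((∫ s in (0:ℝ)..x, s ^ q * (x - s) ^ (p - 1) : ℝ) : ℂ)
      = ((Real.Gamma (q+1) * Real.Gamma p / Real.Gamma (q+1+p) * x ^ (q+p) : ℝ) : ℂ) := by
    rw [key]; push_cast; ring
  exact_mod_cast key2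

lemma betaIntegrand_intervalIntegrable {p q x : ℝ} (hp : 0 < p) (hq : 0 < q) (hx : 0 < x) :
    IntervalIntegrable (fun s => s ^ q * (x - s) ^ (p - 1)) volume 0 x := by
  have h1 : IntervalIntegrable (fun s : ℝ => (x - s) ^ (p - 1)) volume 0 x := by
    have h0 := intervalIntegral.intervalIntegrable_rpow' (a := 0) (b := x) (by linarith : (-1:ℝ) < p - 1)
    have h2 := h0.comp_sub_left x
    simpa using h2.symm
  apply h1.continuousOn_mul
  intro s _
  exact (Real.continuousAt_rpow_const s q (Or.inr hq.le)).continuousWithinAt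

lemma lint_rpow {r x : ℝ} (hr : -1 < r) (hx : 0 < x) :
    ∫⁻ t in Ioc 0 x, ENNReal.ofReal (t ^ r) = ENNReal.ofReal (x ^ (r+1) / (r+1)) := by
  have hInt : IntegrableOn (fun t : ℝ => t ^ r) (Ioc 0 x) volume := by
    have := intervalIntegral.intervalIntegrable_rpow' (a := 0) (b := x) hr
    rwa [intervalIntegrable_iff, uIoc_of_le hx.le] at this
  rw [← ofReal_integral_eq_lintegral_ofReal hInt]
  · congr 1
    rw [← intervalIntegral.integral_of_le hx.le, integral_rpow (Or.inl hr),
      Real.zero_rpow (by linarith : r + 1 ≠ 0)]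
    ring
  · refine (ae_restrict_iff' measurableSet_Ioc).2 (ae_of_all _ fun t ht => ?_)
    exact Real.rpow_nonneg ht.1.le r

lemma lint_beta {p q x : ℝ} (hp : 0 < p) (hq : 0 < q) (hx : 0 < x) :
    ∫⁻ s in Ioo 0 x, ENNReal.ofReal (p * (x - s) ^ (p-1)) * ENNReal.ofReal (s ^ q)
      = ENNReal.ofReal (p * (Real.Gamma (q+1) * Real.Gamma p / Real.Gamma (q+1+p)) * x ^ (q+p)) := by
  have h1 : ∀ s ∈ Ioo (0:ℝ) x, ENNReal.ofReal (p * (x - s) ^ (p-1)) * ENNReal.ofReal (s ^ q)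
      = ENNReal.ofReal (p * (s ^ q * (x - s) ^ (p-1))) := by
    intro s hs
    rw [← ENNReal.ofReal_mul (by
      have : (0:ℝ) ≤ (x - s) ^ (p-1) := Real.rpow_nonneg (by linarith [hs.2]) _
      positivity)]
    ring_nf
  rw [setLIntegral_congr_fun measurableSet_Ioo h1,
    setLIntegral_congr (Ioo_ae_eq_Ioc (μ := volume) (a := (0:ℝ)) (b := x))]
  have hInt : IntegrableOn (fun s : ℝ => p * (s ^ q * (x - s) ^ (p-1))) (Ioc 0 x) volume := by
    have := (betaIntegrand_intervalIntegrable hp hq hx).const_mul p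
    rwa [intervalIntegrable_iff, uIoc_of_le hx.le] at this
  rw [← ofReal_integral_eq_lintegral_ofReal hInt]
  · congr 1
    rw [← intervalIntegral.integral_of_le hx.le, intervalIntegral.integral_const_mul,
      beta_integral_eval hp hq hx]
    ring
  · refine (ae_restrict_iff' measurableSet_Ioc).2 (ae_of_all _ fun s hs => ?_)
    have h2 : (0:ℝ) ≤ s ^ q := Real.rpow_nonneg hs.1.le _
    have h3 : (0:ℝ) ≤ (x - s) ^ (p-1) := Real.rpow_nonneg (by linarith [hs.2]) _
    positivity

lemma base_lemma (ν : Measure ℝ) (f : ℝ → ℝ) {c m : ℝ} (hc : 0 < c) (hm : 0 < m)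
    (hνd : ν = volume.withDensity fun t => ENNReal.ofReal (f t))
    (hν0 : ν (Iic 0) = 0)
    (hf : Tendsto (fun x => f x / (c * x ^ (m-1))) (nhdsWithin 0 (Ioi 0)) (nhds 1)) :
    Tendsto (fun x => (ν (Iic x)).toReal / (c / m * x ^ m)) (nhdsWithin 0 (Ioi 0)) (nhds 1) := by
  have hIic : ∀ x : ℝ, 0 < x → ν (Iic x) = ∫⁻ t in Ioc 0 x, ENNReal.ofReal (f t) := by
    intro x hx
    have h1 : Iic x = Iic 0 ∪ Ioc 0 x := (Iic_union_Ioc_eq_Iic hx.le).symm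
    rw [h1, measure_union (Iic_disjoint_Ioc le_rfl) measurableSet_Ioc, hν0, zero_add,
      hνd, withDensity_apply _ measurableSet_Ioc]
  apply tendsto_of_bounds
  · filter_upwards [eventually_pos] with x hx
    have := Real.rpow_pos_of_pos hx m
    positivity
  · intro ε hε0 hε1
    obtain ⟨δ, hδ, hb⟩ := exists_delta (eventually_bounds hc hf hε0)
    filter_upwards [eventually_pos, eventually_lt_delta hδ] with x hx hxδ
    have hxm : (0:ℝ) < x ^ m := Real.rpow_pos_of_pos hx m
    have hGnn : (0:ℝ) ≤ c/m * x ^ m := by positivity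
    have hup : ν (Iic x) ≤ ENNReal.ofReal ((1+ε) * (c/m * x ^ m)) := by
      rw [hIic x hx]
      calc ∫⁻ t in Ioc 0 x, ENNReal.ofReal (f t)
          ≤ ∫⁻ t in Ioc 0 x, ENNReal.ofReal ((1+ε) * c * t ^ (m-1)) := by
            apply setLIntegral_mono' measurableSet_Ioc
            intro t ht
            apply ENNReal.ofReal_le_ofReal
            have h2 := (hb t ht.1 (lt_of_le_of_lt ht.2 hxδ)).2
            calc f t ≤ (1+ε) * (c * t ^ (m-1)) := h2
            _ = (1+ε) * c * t ^ (m-1) := by ring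
        _ = ENNReal.ofReal ((1+ε) * c) * ∫⁻ t in Ioc 0 x, ENNReal.ofReal (t ^ (m-1)) := by
            rw [← lintegral_const_mul' _ _ ENNReal.ofReal_ne_top]
            refine setLIntegral_congr_fun measurableSet_Ioc (fun t ht => ?_)
            exact ENNReal.ofReal_mul (mul_nonneg (by linarith) hc.le)
        _ = ENNReal.ofReal ((1+ε) * c) * ENNReal.ofReal (x ^ m / m) := by
            rw [lint_rpow (by linarith) hx, sub_add_cancel]
        _ = ENNReal.ofReal ((1+ε) * (c/m * x ^ m)) := by
            rw [← ENNReal.ofReal_mul (by nlinarith)]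
            congr 1; field_simp
    have hlow : ENNReal.ofReal ((1-ε) * (c/m * x ^ m)) ≤ ν (Iic x) := by
      rw [hIic x hx]
      have h1ε : (0:ℝ) ≤ 1 - ε := by linarith
      calc ENNReal.ofReal ((1-ε) * (c/m * x ^ m))
          = ENNReal.ofReal ((1-ε) * c) * ENNReal.ofReal (x ^ m / m) := by
            rw [← ENNReal.ofReal_mul (mul_nonneg h1ε hc.le)]
            congr 1; field_simp
        _ = ENNReal.ofReal ((1-ε) * c) * ∫⁻ t in Ioc 0 x, ENNReal.ofReal (t ^ (m-1)) := by
            rw [lint_rpow (by linarith) hx, sub_add_cancel]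
        _ = ∫⁻ t in Ioc 0 x, ENNReal.ofReal ((1-ε) * c * t ^ (m-1)) := by
            rw [← lintegral_const_mul' _ _ ENNReal.ofReal_ne_top]
            symm
            refine setLIntegral_congr_fun measurableSet_Ioc (fun t ht => ?_)
            exact ENNReal.ofReal_mul (mul_nonneg h1ε hc.le)
        _ ≤ ∫⁻ t in Ioc 0 x, ENNReal.ofReal (f t) := by
            apply setLIntegral_mono' measurableSet_Ioc
            intro t ht
            apply ENNReal.ofReal_le_ofReal
            have h2 := (hb t ht.1 (lt_of_le_of_lt ht.2 hxδ)).1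
            calc (1-ε) * c * t ^ (m-1) = (1-ε) * (c * t ^ (m-1)) := by ring
            _ ≤ f t := h2
    have hne : ν (Iic x) ≠ ⊤ := ne_top_of_le_ne_top ENNReal.ofReal_ne_top hup
    constructor
    · have h3 := ENNReal.toReal_mono hne hlow
      rwa [ENNReal.toReal_ofReal (mul_nonneg (by linarith) hGnn)] at h3
    · exact ENNReal.toReal_le_of_le_ofReal (mul_nonneg (by linarith) hGnn) hup

lemma conv_lemma (ν ρ : Measure ℝ) [IsProbabilityMeasure ν] [IsProbabilityMeasure ρ]
    {A B p q : ℝ} (hA : 0 < A) (hB : 0 < B) (hp : 0 < p) (hq : 0 < q)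
    (hatom : ∀ s : ℝ, ρ {s} = 0)
    (hν : Tendsto (fun x => (ν (Iic x)).toReal / (A * x ^ p)) (nhdsWithin 0 (Ioi 0)) (nhds 1))
    (hρ : Tendsto (fun x => (ρ (Iic x)).toReal / (B * x ^ q)) (nhdsWithin 0 (Ioi 0)) (nhds 1)) :
    Tendsto (fun x => ((ν.prod ρ) {z : ℝ × ℝ | z.1 + z.2 ≤ x}).toReal /
      (A * B * (Real.Gamma (p+1) * Real.Gamma (q+1) / Real.Gamma (p+q+1)) * x ^ (p+q)))
      (nhdsWithin 0 (Ioi 0)) (nhds 1) := by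
  have hΓp : 0 < Real.Gamma (p+1) := Real.Gamma_pos_of_pos (by linarith)
  have hΓq : 0 < Real.Gamma (q+1) := Real.Gamma_pos_of_pos (by linarith)
  have hΓpq : 0 < Real.Gamma (p+q+1) := Real.Gamma_pos_of_pos (by linarith)
  have hD : 0 < A * B * (Real.Gamma (p+1) * Real.Gamma (q+1) / Real.Gamma (p+q+1)) :=
    mul_pos (mul_pos hA hB) (div_pos (mul_pos hΓp hΓq) hΓpq)
  have hDalt : A * B * (p * (Real.Gamma (q+1) * Real.Gamma p / Real.Gamma (q+1+p)))
      = A * B * (Real.Gamma (p+1) * Real.Gamma (q+1) / Real.Gamma (p+q+1)) := by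
    rw [Real.Gamma_add_one hp.ne', show q+1+p = p+q+1 by ring]
    ring
  have hν0 : ν (Iic 0) = 0 := cdf_zero_at_zero ν hA hp hν
  have hρ0 : ρ (Iic 0) = 0 := cdf_zero_at_zero ρ hB hq hρ
  have hρIoo : ∀ s : ℝ, 0 < s → ρ (Ioo 0 s) = ρ (Iic s) := by
    intro s hs
    refine le_antisymm (measure_mono (Ioo_subset_Ioc_self.trans Ioc_subset_Iic_self)) ?_
    have hsub : Iic s ⊆ (Iic 0 ∪ Ioo 0 s) ∪ {s} := by
      intro u hu
      rcases le_or_gt u 0 with h | h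
      · exact Or.inl (Or.inl h)
      · rcases lt_or_eq_of_le (mem_Iic.mp hu) with h2 | h2
        · exact Or.inl (Or.inr ⟨h, h2⟩)
        · exact Or.inr (by simp [h2])
    calc ρ (Iic s) ≤ ρ ((Iic 0 ∪ Ioo 0 s) ∪ {s}) := measure_mono hsub
      _ ≤ ρ (Iic 0 ∪ Ioo 0 s) + ρ {s} := measure_union_le _ _
      _ ≤ ρ (Iic 0) + ρ (Ioo 0 s) + ρ {s} :=
          add_le_add (measure_union_le _ _) le_rfl
      _ = ρ (Ioo 0 s) := by rw [hρ0, hatom s]; simp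
  have hIx : ∀ x : ℝ, 0 < x → (ν.prod ρ) {z : ℝ × ℝ | z.1 + z.2 ≤ x}
      = ∫⁻ t in Ioc 0 x, ν (Iic (x - t)) ∂ρ := by
    intro x hx
    have hE : MeasurableSet {z : ℝ × ℝ | z.1 + z.2 ≤ x} :=
      measurableSet_le (measurable_fst.add measurable_snd) measurable_const
    rw [Measure.prod_apply_symm hE]
    have hpre : ∀ t : ℝ, ((fun s => (s, t)) ⁻¹' {z : ℝ × ℝ | z.1 + z.2 ≤ x}) = Iic (x - t) := by
      intro u; ext v
      simp [le_sub_iff_add_le]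
    simp_rw [hpre]
    rw [← lintegral_add_compl (fun t => ν (Iic (x - t)))
      (measurableSet_Ioc (a := (0:ℝ)) (b := x))]
    have hcompl : (Ioc (0:ℝ) x)ᶜ = Iic 0 ∪ Ioi x := by
      ext u
      simp only [mem_compl_iff, mem_Ioc, not_and_or, not_lt, not_le, mem_union, mem_Iic, mem_Ioi]
    have hzero : ∫⁻ t in (Ioc (0:ℝ) x)ᶜ, ν (Iic (x - t)) ∂ρ = 0 := by
      refine le_antisymm ?_ zero_le
      rw [hcompl]
      refine le_trans (lintegral_union_le _ _ _) ?_
      have hz1 : ∫⁻ t in Iic (0:ℝ), ν (Iic (x - t)) ∂ρ = 0 :=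
        setLIntegral_measure_zero _ _ hρ0
      have hz2 : ∫⁻ t in Ioi x, ν (Iic (x - t)) ∂ρ = 0 := by
        have hb : ∀ t ∈ Ioi x, ν (Iic (x - t)) ≤ (fun _ => (0:ℝ≥0∞)) t := by
          intro t ht
          rw [mem_Ioi] at ht
          calc ν (Iic (x - t)) ≤ ν (Iic 0) :=
                measure_mono (Iic_subset_Iic.mpr (by linarith))
          _ = 0 := hν0
        refine le_antisymm (le_trans (setLIntegral_mono' measurableSet_Ioi hb) ?_) zero_le
        simp [lintegral_zero]
      rw [hz1, hz2]
      simp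
    rw [hzero, add_zero]
  have hJ : ∀ x : ℝ, 0 < x → ∫⁻ t in Ioc 0 x, ENNReal.ofReal ((x - t) ^ p) ∂ρ
      = ∫⁻ s in Ioo 0 x, ENNReal.ofReal (p * (x - s) ^ (p-1)) * ρ (Iic s) := by
    intro x hx
    have hinner : ∀ t ∈ Ioc (0:ℝ) x, ENNReal.ofReal ((x - t) ^ p)
        = ∫⁻ s, (if t < s ∧ s < x then ENNReal.ofReal (p * (x - s) ^ (p-1)) else 0) ∂volume := by
      intro t ht
      have hFt : (fun s => if t < s ∧ s < x then ENNReal.ofReal (p * (x - s) ^ (p-1)) else 0)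
          = (Ioo t x).indicator (fun s => ENNReal.ofReal (p * (x - s) ^ (p-1))) := by
        funext u
        simp [Set.indicator_apply, mem_Ioo]
      rw [hFt, lintegral_indicator measurableSet_Ioo,
        setLIntegral_congr (Ioo_ae_eq_Ioc (μ := volume) (a := t) (b := x))]
      have hInt : IntegrableOn (fun s : ℝ => p * (x - s) ^ (p-1)) (Ioc t x) volume := by
        have h5 := ((intervalIntegral.intervalIntegrable_rpow' (a := 0) (b := x - t)
          (by linarith : (-1:ℝ) < p - 1)).comp_sub_left x).symm.const_mul p
        rw [show x - 0 = x from sub_zero x, show x - (x - t) = t from by ring] at h5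
        rwa [intervalIntegrable_iff, uIoc_of_le ht.2] at h5
      rw [← ofReal_integral_eq_lintegral_ofReal hInt]
      · congr 1
        rw [← intervalIntegral.integral_of_le ht.2, intervalIntegral.integral_const_mul,
          intervalIntegral.integral_comp_sub_left (fun u => u ^ (p-1)) x, sub_self,
          integral_rpow (Or.inl (by linarith : (-1:ℝ) < p-1)),
          Real.zero_rpow (by linarith : p - 1 + 1 ≠ 0), sub_add_cancel]
        field_simp
        simp
      · refine (ae_restrict_iff' measurableSet_Ioc).2 (ae_of_all _ fun u hu => ?_)
        have : (0:ℝ) ≤ (x - u) ^ (p-1) := Real.rpow_nonneg (by linarith [hu.2]) _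
        positivity
    have hswap : ∫⁻ t in Ioc 0 x,
        (∫⁻ s, (if t < s ∧ s < x then ENNReal.ofReal (p * (x - s) ^ (p-1)) else 0) ∂volume) ∂ρ
        = ∫⁻ s, (∫⁻ t in Ioc 0 x,
            (if t < s ∧ s < x then ENNReal.ofReal (p * (x - s) ^ (p-1)) else 0) ∂ρ) ∂volume := by
      apply lintegral_lintegral_swap
      apply Measurable.aemeasurable
      have hset : MeasurableSet {z : ℝ × ℝ | z.1 < z.2 ∧ z.2 < x} :=
        (measurableSet_lt measurable_fst measurable_snd).inter
          (measurableSet_lt measurable_snd measurable_const)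
      have hfm : Measurable fun z : ℝ × ℝ => ENNReal.ofReal (p * (x - z.2) ^ (p-1)) := by
        apply Measurable.ennreal_ofReal
        exact ((measurable_const.sub measurable_snd).pow measurable_const).const_mul p
      exact Measurable.ite hset hfm measurable_const
    have houter : ∀ s : ℝ, (∫⁻ t in Ioc 0 x,
        (if t < s ∧ s < x then ENNReal.ofReal (p * (x - s) ^ (p-1)) else 0) ∂ρ)
        = (Ioo 0 x).indicator (fun u => ENNReal.ofReal (p * (x - u) ^ (p-1)) * ρ (Iic u)) s := by
      intro s
      by_cases hs : 0 < s ∧ s < x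
      · have h1 : ∀ t : ℝ, (if t < s ∧ s < x then ENNReal.ofReal (p * (x - s) ^ (p-1)) else 0)
            = (Iio s).indicator (fun _ => ENNReal.ofReal (p * (x - s) ^ (p-1))) t := by
          intro t
          by_cases h : t < s
          · simp [Set.indicator_apply, h, hs.2]
          · simp [Set.indicator_apply, h]
        have h2 : Iio s ∩ Ioc 0 x = Ioo 0 s := by
          ext u
          simp only [mem_inter_iff, mem_Iio, mem_Ioc, mem_Ioo]
          constructor
          · rintro ⟨h3, h4, h5⟩; exact ⟨h4, h3⟩
          · rintro ⟨h3, h4⟩; exact ⟨h4, h3, le_trans h4.le hs.2.le⟩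
        simp_rw [h1]
        rw [lintegral_indicator measurableSet_Iio, Measure.restrict_restrict measurableSet_Iio,
          setLIntegral_const, h2, hρIoo s hs.1, Set.indicator_of_mem (mem_Ioo.mpr hs)]
      · rw [Set.indicator_of_notMem (by simpa [mem_Ioo] using hs)]
        have h1 : ∀ t ∈ Ioc (0:ℝ) x,
            (if t < s ∧ s < x then ENNReal.ofReal (p * (x - s) ^ (p-1)) else 0) = 0 := by
          intro t ht
          rw [if_neg]
          rintro ⟨h2, h3⟩
          rcases not_and_or.mp hs with h4 | h4
          · exact h4 (lt_trans ht.1 h2)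
          · exact h4 h3
        rw [setLIntegral_congr_fun measurableSet_Ioc h1, lintegral_zero]
    calc ∫⁻ t in Ioc 0 x, ENNReal.ofReal ((x - t) ^ p) ∂ρ
        = ∫⁻ t in Ioc 0 x,
            (∫⁻ s, (if t < s ∧ s < x then ENNReal.ofReal (p * (x - s) ^ (p-1)) else 0) ∂volume) ∂ρ :=
          setLIntegral_congr_fun measurableSet_Ioc hinner
      _ = ∫⁻ s, (∫⁻ t in Ioc 0 x,
            (if t < s ∧ s < x then ENNReal.ofReal (p * (x - s) ^ (p-1)) else 0) ∂ρ) ∂volume := hswap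
      _ = ∫⁻ s, (Ioo 0 x).indicator
            (fun u => ENNReal.ofReal (p * (x - u) ^ (p-1)) * ρ (Iic u)) s ∂volume :=
          lintegral_congr houter
      _ = ∫⁻ s in Ioo 0 x, ENNReal.ofReal (p * (x - s) ^ (p-1)) * ρ (Iic s) :=
          lintegral_indicator measurableSet_Ioo _
  apply tendsto_of_bounds
  · filter_upwards [eventually_pos] with x hx
    have := Real.rpow_pos_of_pos hx (p+q)
    positivity
  · intro ε hε0 hε1
    have hε30 : 0 < ε/3 := by linarith
    obtain ⟨δ1, hδ1, hb1⟩ := exists_delta (eventually_bounds hA hν hε30)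
    obtain ⟨δ2, hδ2, hb2⟩ := exists_delta (eventually_bounds hB hρ hε30)
    filter_upwards [eventually_pos, eventually_lt_delta (lt_min hδ1 hδ2)] with x hx hxδ
    have hxδ1 : x < δ1 := lt_of_lt_of_le hxδ (min_le_left _ _)
    have hxδ2 : x < δ2 := lt_of_lt_of_le hxδ (min_le_right _ _)
    have hDx : (0:ℝ) ≤ A * B * (Real.Gamma (p+1) * Real.Gamma (q+1) / Real.Gamma (p+q+1)) * x ^ (p+q) :=
      mul_nonneg hD.le (Real.rpow_nonneg hx.le _)
    have hLup : ∀ t ∈ Ioc (0:ℝ) x, ν (Iic (x - t)) ≤ ENNReal.ofReal ((1+ε/3) * A * (x - t) ^ p) := by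
      intro t ht
      rcases eq_or_lt_of_le ht.2 with h | h
      · rw [h, sub_self]
        rw [hν0]
        exact zero_le
      · have hs : 0 < x - t := by linarith
        have hnn : (0:ℝ) ≤ (1+ε/3) * A * (x - t) ^ p :=
          mul_nonneg (mul_nonneg (by linarith) hA.le) (Real.rpow_nonneg hs.le p)
        rw [ENNReal.le_ofReal_iff_toReal_le (measure_ne_top ν _) hnn]
        calc (ν (Iic (x - t))).toReal ≤ (1+ε/3) * (A * (x - t) ^ p) :=
              (hb1 (x - t) hs (by linarith [ht.1])).2
        _ = (1+ε/3) * A * (x - t) ^ p := by ring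
    have hLlow : ∀ t ∈ Ioc (0:ℝ) x,
        ENNReal.ofReal ((1-ε/3) * A * (x - t) ^ p) ≤ ν (Iic (x - t)) := by
      intro t ht
      rcases eq_or_lt_of_le ht.2 with h | h
      · rw [h, sub_self, Real.zero_rpow hp.ne', mul_zero, ENNReal.ofReal_zero]
        exact zero_le
      · have hs : 0 < x - t := by linarith
        apply ENNReal.ofReal_le_of_le_toReal
        calc (1-ε/3) * A * (x - t) ^ p = (1-ε/3) * (A * (x - t) ^ p) := by ring
        _ ≤ (ν (Iic (x - t))).toReal := (hb1 (x - t) hs (by linarith [ht.1])).1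
    have hIup : (ν.prod ρ) {z : ℝ × ℝ | z.1 + z.2 ≤ x}
        ≤ ENNReal.ofReal ((1+ε/3)^2 *
          (A * B * (Real.Gamma (p+1) * Real.Gamma (q+1) / Real.Gamma (p+q+1)) * x ^ (p+q))) := by
      rw [hIx x hx]
      calc ∫⁻ t in Ioc 0 x, ν (Iic (x - t)) ∂ρ
          ≤ ∫⁻ t in Ioc 0 x, ENNReal.ofReal ((1+ε/3) * A * (x - t) ^ p) ∂ρ :=
            setLIntegral_mono' measurableSet_Ioc hLup
        _ = ENNReal.ofReal ((1+ε/3) * A) * ∫⁻ t in Ioc 0 x, ENNReal.ofReal ((x - t) ^ p) ∂ρ := by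
            rw [← lintegral_const_mul' _ _ ENNReal.ofReal_ne_top]
            refine setLIntegral_congr_fun measurableSet_Ioc (fun t ht => ?_)
            exact ENNReal.ofReal_mul (mul_nonneg (by linarith) hA.le)
        _ = ENNReal.ofReal ((1+ε/3) * A) *
              ∫⁻ s in Ioo 0 x, ENNReal.ofReal (p * (x - s) ^ (p-1)) * ρ (Iic s) := by
            rw [hJ x hx]
        _ ≤ ENNReal.ofReal ((1+ε/3) * A) *
              ∫⁻ s in Ioo 0 x, ENNReal.ofReal (p * (x - s) ^ (p-1)) *
                ENNReal.ofReal ((1+ε/3) * B * s ^ q) := by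
            apply mul_le_mul_right
            refine setLIntegral_mono' measurableSet_Ioo (fun s hs => ?_)
            apply mul_le_mul_right
            have hnn : (0:ℝ) ≤ (1+ε/3) * B * s ^ q :=
              mul_nonneg (mul_nonneg (by linarith) hB.le) (Real.rpow_nonneg hs.1.le q)
            rw [ENNReal.le_ofReal_iff_toReal_le (measure_ne_top ρ _) hnn]
            calc (ρ (Iic s)).toReal ≤ (1+ε/3) * (B * s ^ q) :=
                  (hb2 s hs.1 (lt_trans hs.2 hxδ2)).2
            _ = (1+ε/3) * B * s ^ q := by ring
        _ = ENNReal.ofReal ((1+ε/3) * A) * (ENNReal.ofReal ((1+ε/3) * B) *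
              ∫⁻ s in Ioo 0 x, ENNReal.ofReal (p * (x - s) ^ (p-1)) * ENNReal.ofReal (s ^ q)) := by
            congr 1
            rw [← lintegral_const_mul' _ _ ENNReal.ofReal_ne_top]
            refine setLIntegral_congr_fun measurableSet_Ioo (fun s hs => ?_)
            rw [ENNReal.ofReal_mul (mul_nonneg (by linarith : (0:ℝ) ≤ 1+ε/3) hB.le)]
            ring
        _ = ENNReal.ofReal ((1+ε/3) * A) * (ENNReal.ofReal ((1+ε/3) * B) *
              ENNReal.ofReal (p * (Real.Gamma (q+1) * Real.Gamma p / Real.Gamma (q+1+p)) * x ^ (q+p))) := by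
            rw [lint_beta hp hq hx]
        _ = ENNReal.ofReal ((1+ε/3)^2 *
              (A * B * (Real.Gamma (p+1) * Real.Gamma (q+1) / Real.Gamma (p+q+1)) * x ^ (p+q))) := by
            rw [← ENNReal.ofReal_mul (by nlinarith : (0:ℝ) ≤ (1+ε/3) * B),
              ← ENNReal.ofReal_mul (by nlinarith : (0:ℝ) ≤ (1+ε/3) * A)]
            congr 1
            rw [← hDalt, add_comm q p]
            ring
    have hIlow : ENNReal.ofReal ((1-ε/3)^2 *
          (A * B * (Real.Gamma (p+1) * Real.Gamma (q+1) / Real.Gamma (p+q+1)) * x ^ (p+q)))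
        ≤ (ν.prod ρ) {z : ℝ × ℝ | z.1 + z.2 ≤ x} := by
      rw [hIx x hx]
      have h1e : (0:ℝ) ≤ 1 - ε/3 := by linarith
      calc ENNReal.ofReal ((1-ε/3)^2 *
            (A * B * (Real.Gamma (p+1) * Real.Gamma (q+1) / Real.Gamma (p+q+1)) * x ^ (p+q)))
          = ENNReal.ofReal ((1-ε/3) * A) * (ENNReal.ofReal ((1-ε/3) * B) *
              ENNReal.ofReal (p * (Real.Gamma (q+1) * Real.Gamma p / Real.Gamma (q+1+p)) * x ^ (q+p))) := by
            rw [← ENNReal.ofReal_mul (mul_nonneg h1e hB.le),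
              ← ENNReal.ofReal_mul (mul_nonneg h1e hA.le)]
            congr 1
            rw [← hDalt, add_comm q p]
            ring
        _ = ENNReal.ofReal ((1-ε/3) * A) * (ENNReal.ofReal ((1-ε/3) * B) *
              ∫⁻ s in Ioo 0 x, ENNReal.ofReal (p * (x - s) ^ (p-1)) * ENNReal.ofReal (s ^ q)) := by
            rw [lint_beta hp hq hx]
        _ = ENNReal.ofReal ((1-ε/3) * A) *
              ∫⁻ s in Ioo 0 x, ENNReal.ofReal (p * (x - s) ^ (p-1)) *
                ENNReal.ofReal ((1-ε/3) * B * s ^ q) := by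
            congr 1
            rw [← lintegral_const_mul' _ _ ENNReal.ofReal_ne_top]
            refine setLIntegral_congr_fun measurableSet_Ioo (fun s hs => ?_)
            rw [ENNReal.ofReal_mul (mul_nonneg h1e hB.le)]
            ring
        _ ≤ ENNReal.ofReal ((1-ε/3) * A) *
              ∫⁻ s in Ioo 0 x, ENNReal.ofReal (p * (x - s) ^ (p-1)) * ρ (Iic s) := by
            apply mul_le_mul_right
            refine setLIntegral_mono' measurableSet_Ioo (fun s hs => ?_)
            apply mul_le_mul_right
            apply ENNReal.ofReal_le_of_le_toReal
            calc (1-ε/3) * B * s ^ q = (1-ε/3) * (B * s ^ q) := by ring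
            _ ≤ (ρ (Iic s)).toReal := (hb2 s hs.1 (lt_trans hs.2 hxδ2)).1
        _ = ENNReal.ofReal ((1-ε/3) * A) * ∫⁻ t in Ioc 0 x, ENNReal.ofReal ((x - t) ^ p) ∂ρ := by
            rw [hJ x hx]
        _ = ∫⁻ t in Ioc 0 x, ENNReal.ofReal ((1-ε/3) * A * (x - t) ^ p) ∂ρ := by
            rw [← lintegral_const_mul' _ _ ENNReal.ofReal_ne_top]
            symm
            refine setLIntegral_congr_fun measurableSet_Ioc (fun t ht => ?_)
            exact ENNReal.ofReal_mul (mul_nonneg h1e hA.le)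
        _ ≤ ∫⁻ t in Ioc 0 x, ν (Iic (x - t)) ∂ρ :=
            setLIntegral_mono' measurableSet_Ioc hLlow
    have hne : (ν.prod ρ) {z : ℝ × ℝ | z.1 + z.2 ≤ x} ≠ ⊤ := measure_ne_top _ _
    constructor
    · have h3 := ENNReal.toReal_mono hne hIlow
      rw [ENNReal.toReal_ofReal (mul_nonneg (by positivity) hDx)] at h3
      nlinarith [h3, hDx, mul_nonneg hε0.le hDx, mul_nonneg (mul_nonneg hε0.le hε0.le) hDx]
    · have h3 := ENNReal.toReal_le_of_le_ofReal (mul_nonneg (by positivity) hDx) hIup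
      nlinarith [h3, hDx, mul_nonneg hε0.le hDx, mul_nonneg (mul_nonneg hε0.le hε0.le) hDx,
        mul_nonneg (mul_nonneg hε0.le (by linarith : (0:ℝ) ≤ 3 - ε)) hDx]

lemma map_iic {Ω : Type*} [MeasurableSpace Ω] (μ : Measure Ω) (g : Ω → ℝ)
    (hg : Measurable g) (x : ℝ) : μ {ω | g ω ≤ x} = (Measure.map g μ) (Iic x) := by
  rw [Measure.map_apply hg measurableSet_Iic]
  rfl

lemma sum_lemma {Ω : Type*} [MeasurableSpace Ω] (μ : Measure Ω) [IsProbabilityMeasure μ]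
    {L : ℕ} (γ : Fin L → Ω → ℝ) (f : Fin L → ℝ → ℝ) (c m : Fin L → ℝ)
    (hmeas : ∀ ℓ, Measurable (γ ℓ))
    (hindep : iIndepFun γ μ)
    (hnonneg : ∀ ℓ ω, 0 ≤ γ ℓ ω)
    (hc : ∀ ℓ, 0 < c ℓ) (hm : ∀ ℓ, 0 < m ℓ)
    (hdensity : ∀ ℓ, Measure.map (γ ℓ) μ =
      MeasureTheory.volume.withDensity (fun x => ENNReal.ofReal (f ℓ x)))
    (hasymp : ∀ ℓ, Tendsto (fun x : ℝ => f ℓ x / (c ℓ * x ^ (m ℓ - 1)))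
      (nhdsWithin 0 (Ioi 0)) (nhds 1))
    (s : Finset (Fin L)) (hs : s.Nonempty) :
    Tendsto (fun x : ℝ => (μ {ω | ∑ ℓ ∈ s, γ ℓ ω ≤ x}).toReal /
      ((∏ ℓ ∈ s, c ℓ * Real.Gamma (m ℓ)) / Real.Gamma (1 + ∑ ℓ ∈ s, m ℓ) * x ^ (∑ ℓ ∈ s, m ℓ)))
      (nhdsWithin 0 (Ioi 0)) (nhds 1) := by
  have hatom : ∀ a : Fin L, ∀ t : ℝ, (Measure.map (γ a) μ) {t} = 0 := by
    intro a t
    rw [hdensity a, withDensity_apply _ (measurableSet_singleton t),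
      Measure.restrict_eq_zero.mpr (by simp), lintegral_zero_measure]
  have hsingle : ∀ a : Fin L, Tendsto (fun x : ℝ =>
      ((Measure.map (γ a) μ) (Iic x)).toReal / (c a / m a * x ^ (m a)))
      (nhdsWithin 0 (Ioi 0)) (nhds 1) := by
    intro a
    refine base_lemma _ (f a) (hc a) (hm a) (hdensity a) ?_ (hasymp a)
    have h1 : (Measure.map (γ a) μ) (Iio 0) = 0 := by
      rw [Measure.map_apply (hmeas a) measurableSet_Iio]
      convert measure_empty (μ := μ)
      exact eq_empty_iff_forall_notMem.mpr fun ω hω =>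
        absurd (mem_preimage.mp hω) (not_lt.2 (hnonneg a ω))
    rw [← Iio_union_right]
    exact measure_union_null h1 (hatom a 0)
  induction hs using Finset.Nonempty.cons_induction with
  | singleton a =>
    have hmap : ∀ x : ℝ, μ {ω | ∑ ℓ ∈ {a}, γ ℓ ω ≤ x} = (Measure.map (γ a) μ) (Iic x) := by
      intro x
      rw [← map_iic μ (γ a) (hmeas a) x]
      congr 1
      ext ω
      simp
    have hΓ : (0:ℝ) < Real.Gamma (m a) := Real.Gamma_pos_of_pos (hm a)
    have hconst : (∏ ℓ ∈ ({a} : Finset (Fin L)), c ℓ * Real.Gamma (m ℓ)) /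
        Real.Gamma (1 + ∑ ℓ ∈ ({a} : Finset (Fin L)), m ℓ) = c a / m a := by
      rw [Finset.prod_singleton, Finset.sum_singleton, add_comm,
        Real.Gamma_add_one (hm a).ne']
      rw [mul_comm (m a) (Real.Gamma (m a)), ← div_div, mul_div_assoc,
        div_self hΓ.ne', mul_one]
    refine (hsingle a).congr fun x => ?_
    rw [hmap x, hconst, Finset.sum_singleton]
  | cons a t hat hts iht =>
    have hSmeas : Measurable fun ω => ∑ j ∈ t, γ j ω :=
      Finset.measurable_sum t fun i _ => hmeas i
    haveI h1 : IsProbabilityMeasure (Measure.map (fun ω => ∑ j ∈ t, γ j ω) μ) :=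
      Measure.isProbabilityMeasure_map hSmeas.aemeasurable
    haveI h2 : IsProbabilityMeasure (Measure.map (γ a) μ) :=
      Measure.isProbabilityMeasure_map (hmeas a).aemeasurable
    have hind : IndepFun (fun ω => ∑ j ∈ t, γ j ω) (γ a) μ := by
      have h0 := hindep.indepFun_finset_sum_of_notMem hmeas hat
      have h3 : (∑ j ∈ t, γ j) = fun ω => ∑ j ∈ t, γ j ω :=
        funext fun ω => Finset.sum_apply _ _ _
      rwa [h3] at h0
    have hP : (0:ℝ) < ∑ ℓ ∈ t, m ℓ := Finset.sum_pos (fun i _ => hm i) hts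
    have hA : (0:ℝ) < (∏ ℓ ∈ t, c ℓ * Real.Gamma (m ℓ)) /
        Real.Gamma (1 + ∑ ℓ ∈ t, m ℓ) :=
      div_pos (Finset.prod_pos fun i _ => mul_pos (hc i) (Real.Gamma_pos_of_pos (hm i)))
        (Real.Gamma_pos_of_pos (by linarith))
    have hB : (0:ℝ) < c a / m a := div_pos (hc a) (hm a)
    have hevent : ∀ x : ℝ, μ {ω | ∑ ℓ ∈ t, γ ℓ ω ≤ x}
        = (Measure.map (fun ω => ∑ j ∈ t, γ j ω) μ) (Iic x) := by
      intro x
      rw [Measure.map_apply hSmeas measurableSet_Iic]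
      rfl
    have hνS : Tendsto (fun x : ℝ =>
        ((Measure.map (fun ω => ∑ j ∈ t, γ j ω) μ) (Iic x)).toReal /
        ((∏ ℓ ∈ t, c ℓ * Real.Gamma (m ℓ)) / Real.Gamma (1 + ∑ ℓ ∈ t, m ℓ)
          * x ^ (∑ ℓ ∈ t, m ℓ)))
        (nhdsWithin 0 (Ioi 0)) (nhds 1) :=
      iht.congr fun x => by rw [hevent x]
    have happly := conv_lemma (Measure.map (fun ω => ∑ j ∈ t, γ j ω) μ)
      (Measure.map (γ a) μ) hA hB hP (hm a) (hatom a) hνS (hsingle a)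
    have hprodevent : ∀ x : ℝ, μ {ω | ∑ ℓ ∈ Finset.cons a t hat, γ ℓ ω ≤ x}
        = ((Measure.map (fun ω => ∑ j ∈ t, γ j ω) μ).prod (Measure.map (γ a) μ))
            {z : ℝ × ℝ | z.1 + z.2 ≤ x} := by
      intro x
      have hE : MeasurableSet {z : ℝ × ℝ | z.1 + z.2 ≤ x} :=
        measurableSet_le (measurable_fst.add measurable_snd) measurable_const
      have hpre : {ω | ∑ ℓ ∈ Finset.cons a t hat, γ ℓ ω ≤ x}
          = (fun ω => ((fun ω => ∑ j ∈ t, γ j ω) ω, γ a ω)) ⁻¹' {z : ℝ × ℝ | z.1 + z.2 ≤ x} := by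
        ext ω
        simp only [Finset.sum_cons, mem_setOf_eq, mem_preimage]
        constructor <;> intro h <;> linarith
      rw [hpre, ← Measure.map_apply (hSmeas.prodMk (hmeas a)) hE,
        (indepFun_iff_map_prod_eq_prod_map_map hSmeas.aemeasurable
          (hmeas a).aemeasurable).mp hind]
    have hΓP1 : (0:ℝ) < Real.Gamma ((∑ ℓ ∈ t, m ℓ) + 1) := Real.Gamma_pos_of_pos (by linarith)
    have hΓall : (0:ℝ) < Real.Gamma ((∑ ℓ ∈ t, m ℓ) + m a + 1) :=
      Real.Gamma_pos_of_pos (by linarith [hm a])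
    have hΓma : (0:ℝ) < Real.Gamma (m a) := Real.Gamma_pos_of_pos (hm a)
    have hden : (∏ ℓ ∈ t, c ℓ * Real.Gamma (m ℓ)) / Real.Gamma (1 + ∑ ℓ ∈ t, m ℓ) * (c a / m a) *
        (Real.Gamma ((∑ ℓ ∈ t, m ℓ) + 1) * Real.Gamma (m a + 1) /
          Real.Gamma ((∑ ℓ ∈ t, m ℓ) + m a + 1))
        = (c a * Real.Gamma (m a) * ∏ ℓ ∈ t, c ℓ * Real.Gamma (m ℓ)) /
            Real.Gamma (1 + (m a + ∑ ℓ ∈ t, m ℓ)) := by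
      rw [add_comm 1 (∑ ℓ ∈ t, m ℓ), Real.Gamma_add_one (hm a).ne',
        show 1 + (m a + ∑ ℓ ∈ t, m ℓ) = (∑ ℓ ∈ t, m ℓ) + m a + 1 by ring]
      field_simp [hΓP1.ne', hΓall.ne', (hm a).ne']
    refine happly.congr fun x => ?_
    rw [← hprodevent x]
    rw [Finset.prod_cons, Finset.sum_cons]
    congr 1
    rw [← hden, add_comm (∑ ℓ ∈ t, m ℓ) (m a)]

end SumCdfAsymp

theorem sum_cdf_asymptotics_at_origin {Ω : Type*} [MeasurableSpace Ω] (μ : Measure Ω)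
    [IsProbabilityMeasure μ] (L : ℕ) (hL : 0 < L) (γ : Fin L → Ω → ℝ)
    (f : Fin L → ℝ → ℝ) (c m : Fin L → ℝ)
    (hmeas : ∀ ℓ, Measurable (γ ℓ))
    (hindep : iIndepFun γ μ)
    (hnonneg : ∀ ℓ ω, 0 ≤ γ ℓ ω)
    (hc : ∀ ℓ, 0 < c ℓ) (hm : ∀ ℓ, 0 < m ℓ)
    (hdensity : ∀ ℓ, Measure.map (γ ℓ) μ =
      MeasureTheory.volume.withDensity (fun x => ENNReal.ofReal (f ℓ x)))
    (hasymp : ∀ ℓ, Tendsto (fun x : ℝ => f ℓ x / (c ℓ * x ^ (m ℓ - 1)))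
      (nhdsWithin 0 (Ioi 0)) (nhds 1)) :
    Tendsto
      (fun x : ℝ => (μ {ω | ∑ ℓ, γ ℓ ω ≤ x}).toReal /
        ((∏ ℓ, c ℓ * Real.Gamma (m ℓ)) * x ^ (∑ ℓ, m ℓ) / Real.Gamma (1 + ∑ ℓ, m ℓ)))
      (nhdsWithin 0 (Ioi 0)) (nhds 1) := by
  haveI : Nonempty (Fin L) := ⟨⟨0, hL⟩⟩
  have h := SumCdfAsymp.sum_lemma μ γ f c m hmeas hindep hnonneg hc hm hdensity hasymp
    Finset.univ Finset.univ_nonempty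
  refine h.congr fun x => ?_
  congr 1
  rw [div_mul_eq_mul_div]
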